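/- arXiv:2407.00398 — 4 statements merged into one kernel-verified Lean document; each statement's English description precedes it below -/
import Mathlib

section
/- For all φ, ψ ∈ L²(ℝ^d; ℂ) it holds that ((‖φ‖²_{L²} + ‖ψ‖²_{L²})/2) · inf_{λ∈ℂ, |λ|=1} ‖ψ − λφ‖²_{L²} ≤ ∬_{ℝ^d×ℝ^d} |ψ(x)·conj(ψ(y)) − φ(x)·conj(φ(y))|² dx dy. -/
open MeasureTheory

private lemma normSq_key (a b : ℂ) :
    ‖a - b‖ ^ 2 = ‖a‖ ^ 2 + ‖b‖ ^ 2 - 2 * (a * (starRingEnd ℂ) b).re := by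
  have h : ∀ z : ℂ, ‖z‖ ^ 2 = Complex.normSq z := fun z => by
    rw [Complex.sq_norm]
  rw [h, h, h, Complex.normSq_sub]

private lemma re_flip (z w : ℂ) :
    ((starRingEnd ℂ) z * w).re = (z * (starRingEnd ℂ) w).re := by
  simp [Complex.mul_re]

/-- For all `φ, ψ ∈ L²(ℝ^d; ℂ)`,
`((‖φ‖² + ‖ψ‖²)/2) · inf_{|λ|=1} ‖ψ − λφ‖² ≤ ‖ψ ⊗ conj ψ − φ ⊗ conj φ‖²_{L²(ℝ^{2d})}`. -/
theorem lifted_lower_bound (d : ℕ) (φ ψ : EuclideanSpace ℝ (Fin d) → ℂ)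
    (hφ : MemLp φ 2 volume) (hψ : MemLp ψ 2 volume) :
    ((∫ x, ‖φ x‖ ^ 2) + (∫ x, ‖ψ x‖ ^ 2)) / 2 *
      (⨅ lam : {c : ℂ // ‖c‖ = 1}, ∫ x, ‖ψ x - (lam : ℂ) * φ x‖ ^ 2) ≤
    ∫ x, ∫ y, ‖ψ x * (starRingEnd ℂ) (ψ y) - φ x * (starRingEnd ℂ) (φ y)‖ ^ 2 := by
  haveI : Nonempty {c : ℂ // ‖c‖ = 1} := ⟨⟨1, by simp⟩⟩
  -- Integrability facts
  have iφ2 : Integrable (fun x => ‖φ x‖ ^ 2) volume := by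
    have := hφ.integrable_norm_rpow (by norm_num) (by norm_num)
    simpa [ENNReal.toReal_ofNat, Real.rpow_natCast] using this
  have iψ2 : Integrable (fun x => ‖ψ x‖ ^ 2) volume := by
    have := hψ.integrable_norm_rpow (by norm_num) (by norm_num)
    simpa [ENNReal.toReal_ofNat, Real.rpow_natCast] using this
  have hφc : MemLp (fun x => (starRingEnd ℂ) (φ x)) 2 volume :=
    hφ.of_le (RCLike.continuous_conj.comp_aestronglyMeasurable hφ.1)
      (Filter.Eventually.of_forall fun x => by simp)
  have hmul : Integrable (fun x => ψ x * (starRingEnd ℂ) (φ x)) volume := by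
    have := memLp_one_iff_integrable.mp
      (hφc.smul (r := 1) hψ (hpqr := ⟨by simp [ENNReal.inv_two_add_inv_two]⟩))
    simpa [smul_eq_mul, Pi.mul_def] using this
  set A : ℝ := ∫ x, ‖φ x‖ ^ 2 with hA
  set B : ℝ := ∫ x, ‖ψ x‖ ^ 2 with hB
  set c : ℂ := ∫ x, ψ x * (starRingEnd ℂ) (φ x) with hc
  have hA0 : 0 ≤ A := integral_nonneg fun x => by positivity
  have hB0 : 0 ≤ B := integral_nonneg fun x => by positivity
  set t : ℝ := ‖c‖ with htdef
  have ht0 : 0 ≤ t := norm_nonneg _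
  -- ‖c‖ ≤ (A + B)/2
  have ht : t ≤ (A + B) / 2 := by
    have h1 : t ≤ ∫ x, ‖ψ x * (starRingEnd ℂ) (φ x)‖ :=
      norm_integral_le_integral_norm _
    have h2 : (∫ x, ‖ψ x * (starRingEnd ℂ) (φ x)‖) ≤
        ∫ x, (‖φ x‖ ^ 2 + ‖ψ x‖ ^ 2) / 2 := by
      refine integral_mono hmul.norm ((iφ2.add iψ2).div_const 2) fun x => ?_
      simp only [norm_mul, RCLike.norm_conj]
      nlinarith [sq_nonneg (‖φ x‖ - ‖ψ x‖), norm_nonneg (φ x), norm_nonneg (ψ x)]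
    have h3 : (∫ x, (‖φ x‖ ^ 2 + ‖ψ x‖ ^ 2) / 2) = (A + B) / 2 := by
      rw [integral_div, integral_add iφ2 iψ2]
    linarith
  -- inner integral computation
  have inner_eq : ∀ x, (∫ y, ‖ψ x * (starRingEnd ℂ) (ψ y) - φ x * (starRingEnd ℂ) (φ y)‖ ^ 2)
      = ‖ψ x‖ ^ 2 * B + ‖φ x‖ ^ 2 * A
        - 2 * (((starRingEnd ℂ) (ψ x * (starRingEnd ℂ) (φ x))) * c).re := by
    intro x
    have hpt : ∀ y, ‖ψ x * (starRingEnd ℂ) (ψ y) - φ x * (starRingEnd ℂ) (φ y)‖ ^ 2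
        = ‖ψ x‖ ^ 2 * ‖ψ y‖ ^ 2 + ‖φ x‖ ^ 2 * ‖φ y‖ ^ 2
          - 2 * (((starRingEnd ℂ) (ψ x * (starRingEnd ℂ) (φ x)))
              * (ψ y * (starRingEnd ℂ) (φ y))).re := by
      intro y
      rw [normSq_key]
      have harg : (ψ x * (starRingEnd ℂ) (ψ y)) * (starRingEnd ℂ) (φ x * (starRingEnd ℂ) (φ y))
          = (ψ x * (starRingEnd ℂ) (φ x))
              * (starRingEnd ℂ) (ψ y * (starRingEnd ℂ) (φ y)) := by
        simp only [map_mul, Complex.conj_conj]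
        ring
      rw [harg, ← re_flip]
      simp [norm_mul, mul_pow]
    simp_rw [hpt]
    have hi1 : Integrable (fun y => ‖ψ x‖ ^ 2 * ‖ψ y‖ ^ 2 + ‖φ x‖ ^ 2 * ‖φ y‖ ^ 2) volume :=
      (iψ2.const_mul _).add (iφ2.const_mul _)
    have hi2 : Integrable (fun y => 2 * (((starRingEnd ℂ) (ψ x * (starRingEnd ℂ) (φ x)))
        * (ψ y * (starRingEnd ℂ) (φ y))).re) volume :=
      ((hmul.const_mul _).re).const_mul 2
    rw [integral_sub hi1 hi2,
      integral_add (iψ2.const_mul _) (iφ2.const_mul _),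
      integral_const_mul, integral_const_mul, integral_const_mul]
    have h4 : (∫ y, (((starRingEnd ℂ) (ψ x * (starRingEnd ℂ) (φ x)))
        * (ψ y * (starRingEnd ℂ) (φ y))).re)
        = (((starRingEnd ℂ) (ψ x * (starRingEnd ℂ) (φ x))) * c).re := by
      have h := integral_re (μ := volume)
        (hmul.const_mul ((starRingEnd ℂ) (ψ x * (starRingEnd ℂ) (φ x))))
      rw [integral_const_mul] at h
      simpa using h
    rw [h4]
  -- the right hand side equals B² + A² − 2‖c‖²
  have rhs_eq : (∫ x, ∫ y, ‖ψ x * (starRingEnd ℂ) (ψ y) - φ x * (starRingEnd ℂ) (φ y)‖ ^ 2)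
      = B * B + A * A - 2 * t ^ 2 := by
    simp_rw [inner_eq]
    have hre : ∀ x, (((starRingEnd ℂ) (ψ x * (starRingEnd ℂ) (φ x))) * c).re
        = ((ψ x * (starRingEnd ℂ) (φ x)) * (starRingEnd ℂ) c).re := fun x => re_flip _ _
    simp_rw [hre]
    have hi1 : Integrable (fun x => ‖ψ x‖ ^ 2 * B + ‖φ x‖ ^ 2 * A) volume :=
      (iψ2.mul_const _).add (iφ2.mul_const _)
    have hi2 : Integrable (fun x =>
        2 * ((ψ x * (starRingEnd ℂ) (φ x)) * (starRingEnd ℂ) c).re) volume :=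
      ((hmul.mul_const _).re).const_mul 2
    rw [integral_sub hi1 hi2,
      integral_add (iψ2.mul_const _) (iφ2.mul_const _),
      integral_mul_const, integral_mul_const, integral_const_mul]
    have h1 : (∫ x, ((ψ x * (starRingEnd ℂ) (φ x)) * (starRingEnd ℂ) c).re)
        = (c * (starRingEnd ℂ) c).re := by
      have h := integral_re (μ := volume) (hmul.mul_const ((starRingEnd ℂ) c))
      rw [integral_mul_const] at h
      simpa using h
    rw [h1, Complex.mul_conj]
    have h2 : (Complex.normSq c : ℂ).re = t ^ 2 := by
      rw [Complex.ofReal_re, ← Complex.sq_norm, htdef]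
    rw [h2]
  -- value of the functional at a unimodular λ
  have lam_eq : ∀ l : ℂ, ‖l‖ = 1 → (∫ x, ‖ψ x - l * φ x‖ ^ 2)
      = B + A - 2 * ((starRingEnd ℂ) l * c).re := by
    intro l hl
    have hpt : ∀ x, ‖ψ x - l * φ x‖ ^ 2
        = ‖ψ x‖ ^ 2 + ‖φ x‖ ^ 2
          - 2 * ((starRingEnd ℂ) l * (ψ x * (starRingEnd ℂ) (φ x))).re := by
      intro x
      rw [normSq_key]
      have h5 : ψ x * (starRingEnd ℂ) (l * φ x)
          = (starRingEnd ℂ) l * (ψ x * (starRingEnd ℂ) (φ x)) := by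
        simp only [map_mul]; ring
      rw [h5, norm_mul, hl]
      ring
    simp_rw [hpt]
    have hi1 : Integrable (fun x => ‖ψ x‖ ^ 2 + ‖φ x‖ ^ 2) volume := iψ2.add iφ2
    have hi2 : Integrable (fun x =>
        2 * ((starRingEnd ℂ) l * (ψ x * (starRingEnd ℂ) (φ x))).re) volume :=
      ((hmul.const_mul _).re).const_mul 2
    rw [integral_sub hi1 hi2, integral_add iψ2 iφ2, integral_const_mul]
    have h6 : (∫ x, ((starRingEnd ℂ) l * (ψ x * (starRingEnd ℂ) (φ x))).re)
        = ((starRingEnd ℂ) l * c).re := by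
      have h := integral_re (μ := volume) (hmul.const_mul ((starRingEnd ℂ) l))
      rw [integral_const_mul] at h
      simpa using h
    rw [h6]
  -- the infimum is at most A + B − 2t
  have hInf : (⨅ lam : {c : ℂ // ‖c‖ = 1}, ∫ x, ‖ψ x - (lam : ℂ) * φ x‖ ^ 2)
      ≤ A + B - 2 * t := by
    set l0 : ℂ := if c = 0 then 1 else c / (‖c‖ : ℂ) with hl0def
    have hl0 : ‖l0‖ = 1 := by
      by_cases hcz : c = 0
      · simp [hl0def, hcz]
      · have hcn : ‖c‖ ≠ 0 := norm_ne_zero_iff.mpr hcz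
        simp [hl0def, hcz, norm_div, hcn]
    have hval : ((starRingEnd ℂ) l0 * c).re = t := by
      by_cases hcz : c = 0
      · simp [hl0def, hcz, htdef]
      · have hcn : (‖c‖ : ℝ) ≠ 0 := norm_ne_zero_iff.mpr hcz
        have key : (starRingEnd ℂ) l0 * c = ((‖c‖ : ℝ) : ℂ) := by
          rw [hl0def, if_neg hcz, map_div₀, Complex.conj_ofReal,
            div_mul_eq_mul_div, mul_comm, Complex.mul_conj]
          rw [Complex.normSq_eq_norm_sq,
            div_eq_iff (by exact_mod_cast hcn)]
          push_cast
          ring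
        rw [key, Complex.ofReal_re]
    have hbdd : BddBelow (Set.range fun lam : {c : ℂ // ‖c‖ = 1} =>
        ∫ x, ‖ψ x - (lam : ℂ) * φ x‖ ^ 2) := by
      refine ⟨0, fun y hy => ?_⟩
      obtain ⟨lam, rfl⟩ := hy
      exact integral_nonneg fun x => by positivity
    have h7 := ciInf_le hbdd (⟨l0, hl0⟩ : {c : ℂ // ‖c‖ = 1})
    rw [lam_eq l0 hl0, hval] at h7
    linarith
  have hInf0 : 0 ≤ (⨅ lam : {c : ℂ // ‖c‖ = 1}, ∫ x, ‖ψ x - (lam : ℂ) * φ x‖ ^ 2) :=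
    le_ciInf fun lam => integral_nonneg fun x => by positivity
  rw [rhs_eq]
  set I : ℝ := ⨅ lam : {c : ℂ // ‖c‖ = 1}, ∫ x, ‖ψ x - (lam : ℂ) * φ x‖ ^ 2
  nlinarith [sq_nonneg (A - B), mul_nonneg ht0 (by linarith : (0:ℝ) ≤ A + B - 2 * t),
    mul_le_mul_of_nonneg_left hInf (by linarith : (0:ℝ) ≤ (A + B) / 2)]
end

section
/- Let χ : ℝ^d → [0,∞) be a bounded measurable weight and let F, H ∈ L⁴(ℝ^d). Then inf_{λ∈ℂ, |λ|=1} ‖H − λF‖_{ℒ(χ)} ≤ 2 · inf_{c∈ℂ} ‖H − cF‖_{ℒ(χ)} + ‖|H| − |F|‖_{ℒ(χ)}. -/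
open MeasureTheory

/-- The weighted mixed norm `‖F‖_{ℒ(χ)} = (∫ (∫_{B₁(τ)} |F|²)² χ(τ) dτ)^{1/4}`. -/
noncomputable def LNorm {d : ℕ} (χ : EuclideanSpace ℝ (Fin d) → ℝ)
    (F : EuclideanSpace ℝ (Fin d) → ℂ) : ℝ :=
  (∫ τ, (∫ x in Metric.ball τ 1, ‖F x‖ ^ 2) ^ 2 * χ τ) ^ ((1 : ℝ) / 4)

open Metric ENNReal


noncomputable section Aux

variable {d : ℕ}

/-- inner squared lintegral over a unit ball -/
def inn {d : ℕ} (f : EuclideanSpace ℝ (Fin d) → ℝ≥0∞) (τ : EuclideanSpace ℝ (Fin d)) : ℝ≥0∞ :=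
  ∫⁻ x in ball τ 1, f x ^ (2:ℝ)

/-- ENNReal version of the mixed norm -/
def NN {d : ℕ} (w f : EuclideanSpace ℝ (Fin d) → ℝ≥0∞) : ℝ≥0∞ :=
  (∫⁻ τ, (inn f τ) ^ (2:ℝ) * w τ) ^ ((1:ℝ)/4)

lemma inn_congr {f g : EuclideanSpace ℝ (Fin d) → ℝ≥0∞} (h : f =ᵐ[volume] g) :
    inn f = inn g := by
  funext τ
  refine lintegral_congr_ae (ae_restrict_of_ae (h.mono fun x hx => by simp only [hx]))

lemma NN_congr {w f g : EuclideanSpace ℝ (Fin d) → ℝ≥0∞} (h : f =ᵐ[volume] g) :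
    NN w f = NN w g := by
  unfold NN; rw [inn_congr h]

lemma measurable_ballker {g : EuclideanSpace ℝ (Fin d) → ℝ≥0∞} (hf : Measurable g) :
    Measurable (fun p : EuclideanSpace ℝ (Fin d) × EuclideanSpace ℝ (Fin d) =>
      (ball p.1 1).indicator g p.2) := by
  have hs : MeasurableSet {p : EuclideanSpace ℝ (Fin d) × EuclideanSpace ℝ (Fin d) | p.2 ∈ ball p.1 1} := by
    have : {p : EuclideanSpace ℝ (Fin d) × EuclideanSpace ℝ (Fin d) | p.2 ∈ ball p.1 1}
        = {p : EuclideanSpace ℝ (Fin d) × EuclideanSpace ℝ (Fin d) | dist p.2 p.1 < 1} := rfl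
    rw [this]
    exact measurableSet_lt ((continuous_dist.comp (continuous_snd.prodMk continuous_fst)).measurable) measurable_const
  have heq : (fun p : EuclideanSpace ℝ (Fin d) × EuclideanSpace ℝ (Fin d) =>
      (ball p.1 1).indicator g p.2)
      = {p : EuclideanSpace ℝ (Fin d) × EuclideanSpace ℝ (Fin d) | p.2 ∈ ball p.1 1}.indicator
          (fun p => g p.2) := by
    funext p
    by_cases h : dist p.2 p.1 < 1 <;> simp [Set.indicator, mem_ball, h]
  rw [heq]
  exact (hf.comp measurable_snd).indicator hs

lemma measurable_ball_lintegral {g : EuclideanSpace ℝ (Fin d) → ℝ≥0∞} (hg : Measurable g) :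
    Measurable (fun τ => ∫⁻ x in ball τ 1, g x) := by
  have : ∀ τ, (∫⁻ x in ball τ 1, g x) = ∫⁻ x, (ball τ 1).indicator g x := by
    intro τ; rw [lintegral_indicator measurableSet_ball]
  rw [show (fun τ => ∫⁻ x in ball τ 1, g x) = _ from funext this]
  exact Measurable.lintegral_prod_right' (measurable_ballker hg)

lemma measurable_inn {f : EuclideanSpace ℝ (Fin d) → ℝ≥0∞} (hf : Measurable f) :
    Measurable (inn f) :=
  measurable_ball_lintegral (hf.pow_const _)


lemma NN_mono {w f g : EuclideanSpace ℝ (Fin d) → ℝ≥0∞} (h : ∀ x, f x ≤ g x) :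
    NN w f ≤ NN w g := by
  unfold NN inn
  gcongr with τ x <;> first | exact h x | norm_num

lemma NN_add_meas {w f g : EuclideanSpace ℝ (Fin d) → ℝ≥0∞} (hw : Measurable w)
    (hf : Measurable f) (hg : Measurable g) :
    NN w (fun x => f x + g x) ≤ NN w f + NN w g := by
  set u : EuclideanSpace ℝ (Fin d) → ℝ≥0∞ := fun τ => (inn f τ) ^ ((1:ℝ)/2) with hu
  set v : EuclideanSpace ℝ (Fin d) → ℝ≥0∞ := fun τ => (inn g τ) ^ ((1:ℝ)/2) with hv
  have hum : Measurable u := (measurable_inn hf).pow_const _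
  have hvm : Measurable v := (measurable_inn hg).pow_const _
  have hinner : ∀ τ, inn (fun x => f x + g x) τ ≤ (u τ + v τ) ^ (2:ℝ) := by
    intro τ
    have hmink := ENNReal.lintegral_Lp_add_le (p := 2)
      (μ := volume.restrict (ball τ 1)) hf.aemeasurable hg.aemeasurable one_le_two
    have h2 : (inn (fun x => f x + g x) τ) ^ ((1:ℝ)/2) ≤ u τ + v τ := hmink
    calc inn (fun x => f x + g x) τ
        = ((inn (fun x => f x + g x) τ) ^ ((1:ℝ)/2)) ^ (2:ℝ) := by
          rw [← ENNReal.rpow_mul]; norm_num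
      _ ≤ (u τ + v τ) ^ (2:ℝ) := by gcongr
  have houter : (∫⁻ τ, (inn (fun x => f x + g x) τ) ^ (2:ℝ) * w τ)
      ≤ ∫⁻ τ, (u τ + v τ) ^ (4:ℝ) * w τ := by
    refine lintegral_mono fun τ => ?_
    have : ((u τ + v τ) ^ (2:ℝ)) ^ (2:ℝ) = (u τ + v τ) ^ (4:ℝ) := by
      rw [← ENNReal.rpow_mul]; norm_num
    rw [← this]
    gcongr
    exact hinner τ
  set ν := volume.withDensity w with hν
  have hwd : ∀ (h : EuclideanSpace ℝ (Fin d) → ℝ≥0∞), Measurable h →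
      (∫⁻ τ, h τ ∂ν) = ∫⁻ τ, h τ * w τ := by
    intro h hh
    rw [hν, lintegral_withDensity_eq_lintegral_mul volume hw hh]
    simp [mul_comm]
  have hmink4 := ENNReal.lintegral_Lp_add_le (p := 4) (μ := ν)
      hum.aemeasurable hvm.aemeasurable (by norm_num)
  have hNf : (∫⁻ τ, u τ ^ (4:ℝ) ∂ν) ^ ((1:ℝ)/4) = NN w f := by
    rw [hwd _ (hum.pow_const _)]
    unfold NN
    congr 1
    refine lintegral_congr fun τ => ?_
    rw [hu]
    simp only
    rw [← ENNReal.rpow_mul]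
    norm_num
  have hNg : (∫⁻ τ, v τ ^ (4:ℝ) ∂ν) ^ ((1:ℝ)/4) = NN w g := by
    rw [hwd _ (hvm.pow_const _)]
    unfold NN
    congr 1
    refine lintegral_congr fun τ => ?_
    rw [hv]
    simp only
    rw [← ENNReal.rpow_mul]
    norm_num
  calc NN w (fun x => f x + g x)
      ≤ (∫⁻ τ, (u τ + v τ) ^ (4:ℝ) * w τ) ^ ((1:ℝ)/4) := by
        unfold NN; gcongr
    _ = (∫⁻ τ, ((u + v) τ) ^ (4:ℝ) ∂ν) ^ ((1:ℝ)/4) := by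
        congr 1
        rw [hwd (fun τ => ((u + v) τ) ^ (4:ℝ)) ((hum.add hvm).pow_const _)]
        rfl
    _ ≤ (∫⁻ τ, u τ ^ (4:ℝ) ∂ν) ^ ((1:ℝ)/4) + (∫⁻ τ, v τ ^ (4:ℝ) ∂ν) ^ ((1:ℝ)/4) := hmink4
    _ = NN w f + NN w g := by rw [hNf, hNg]

lemma NN_add {w f g : EuclideanSpace ℝ (Fin d) → ℝ≥0∞} (hw : Measurable w)
    (hf : AEMeasurable f volume) (hg : AEMeasurable g volume) :
    NN w (fun x => f x + g x) ≤ NN w f + NN w g := by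
  have h1 : NN w (fun x => f x + g x) = NN w (fun x => hf.mk f x + hg.mk g x) :=
    NN_congr ((hf.ae_eq_mk.and hg.ae_eq_mk).mono fun x ⟨h1, h2⟩ => by simp [h1, h2])
  rw [h1, NN_congr hf.ae_eq_mk (w := w), NN_congr hg.ae_eq_mk (w := w)]
  exact NN_add_meas hw hf.measurable_mk hg.measurable_mk


lemma volume_ball_one (τ : EuclideanSpace ℝ (Fin d)) :
    volume (ball τ 1) = volume (ball (0 : EuclideanSpace ℝ (Fin d)) 1) :=
  Measure.addHaar_ball_center volume τ 1

lemma inn_le_holder {f : EuclideanSpace ℝ (Fin d) → ℝ≥0∞} (hf : AEMeasurable f volume)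
    (τ : EuclideanSpace ℝ (Fin d)) :
    inn f τ ≤ (∫⁻ x in ball τ 1, f x ^ (4:ℝ)) ^ ((1:ℝ)/2) *
      (volume (ball (0 : EuclideanSpace ℝ (Fin d)) 1)) ^ ((1:ℝ)/2) := by
  have hpq : Real.HolderConjugate 2 2 := ⟨by norm_num, by norm_num, by norm_num⟩
  have h := ENNReal.lintegral_mul_le_Lp_mul_Lq (volume.restrict (ball τ 1)) hpq
    (f := fun x => f x ^ (2:ℝ)) (g := fun _ => 1)
    ((hf.restrict.pow_const _)) aemeasurable_const
  simp only [mul_one, Pi.mul_apply, one_mul] at h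
  have h1 : ∀ x, (f x ^ (2:ℝ)) ^ (2:ℝ) = f x ^ (4:ℝ) := by
    intro x; rw [← ENNReal.rpow_mul]; norm_num
  have h2 : (∫⁻ _ in ball τ 1, (1:ℝ≥0∞) ^ (2:ℝ)) = volume (ball τ 1) := by
    simp
  calc inn f τ ≤ (∫⁻ x in ball τ 1, (f x ^ (2:ℝ)) ^ (2:ℝ)) ^ ((1:ℝ)/2) *
        (∫⁻ _ in ball τ 1, (1:ℝ≥0∞) ^ (2:ℝ)) ^ ((1:ℝ)/2) := h
    _ = (∫⁻ x in ball τ 1, f x ^ (4:ℝ)) ^ ((1:ℝ)/2) *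
        (volume (ball (0 : EuclideanSpace ℝ (Fin d)) 1)) ^ ((1:ℝ)/2) := by
        rw [h2, volume_ball_one, lintegral_congr fun x => h1 x]

lemma inn_ne_top {f : EuclideanSpace ℝ (Fin d) → ℝ≥0∞} (hf : AEMeasurable f volume)
    (h4 : (∫⁻ x, f x ^ (4:ℝ)) ≠ ∞) (τ : EuclideanSpace ℝ (Fin d)) : inn f τ ≠ ∞ := by
  refine ne_top_of_le_ne_top ?_ (inn_le_holder hf τ)
  apply ENNReal.mul_ne_top
  · exact (ENNReal.rpow_lt_top_of_nonneg (by norm_num)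
      (ne_top_of_le_ne_top h4 (setLIntegral_le_lintegral _ _))).ne
  · exact (ENNReal.rpow_lt_top_of_nonneg (by norm_num) measure_ball_lt_top.ne).ne

lemma NN_ne_top {w f : EuclideanSpace ℝ (Fin d) → ℝ≥0∞} {C : ℝ≥0∞}
    (hwle : ∀ τ, w τ ≤ C) (hC : C ≠ ∞)
    (hf : AEMeasurable f volume) (h4 : (∫⁻ x, f x ^ (4:ℝ)) ≠ ∞) : NN w f ≠ ∞ := by
  set f' := hf.mk f with hf'
  have hfm : Measurable f' := hf.measurable_mk
  have hcongr : NN w f = NN w f' := NN_congr hf.ae_eq_mk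
  have h4' : (∫⁻ x, f' x ^ (4:ℝ)) ≠ ∞ := by
    have he : (fun x => f x ^ (4:ℝ)) =ᵐ[volume] fun x => f' x ^ (4:ℝ) :=
      hf.ae_eq_mk.mono fun x hx => by simp only [hf', hx]
    rw [← lintegral_congr_ae he]; exact h4
  rw [hcongr]
  set V := volume (ball (0 : EuclideanSpace ℝ (Fin d)) 1) with hV
  have hVtop : V ≠ ∞ := measure_ball_lt_top.ne
  set h : EuclideanSpace ℝ (Fin d) → ℝ≥0∞ := fun x => f' x ^ (4:ℝ) with hh
  have hhm : Measurable h := hfm.pow_const _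
  -- Tonelli
  have hswap : (∫⁻ τ, ∫⁻ x in ball τ 1, h x) = V * ∫⁻ x, h x := by
    have h1 : ∀ τ, (∫⁻ x in ball τ 1, h x) = ∫⁻ x, (ball τ 1).indicator h x := by
      intro τ; rw [lintegral_indicator measurableSet_ball]
    rw [lintegral_congr h1]
    rw [lintegral_lintegral_swap (measurable_ballker hhm).aemeasurable]
    have h2 : ∀ x, (∫⁻ τ, (ball τ 1).indicator h x) = h x * V := by
      intro x
      have : ∀ τ, (ball τ 1).indicator h x = (ball x 1).indicator (fun _ => h x) τ := by
        intro τ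
        simp only [Set.indicator, mem_ball]
        rw [dist_comm x τ]
      rw [lintegral_congr this, lintegral_indicator measurableSet_ball, setLIntegral_const,
        volume_ball_one]
    rw [lintegral_congr h2, lintegral_mul_const _ hhm]
    ring
  -- pointwise bound
  have hpt : ∀ τ, inn f' τ ^ (2:ℝ) * w τ ≤ ((∫⁻ x in ball τ 1, h x) * V) * C := by
    intro τ
    refine mul_le_mul' ?_ (hwle τ)
    have := inn_le_holder hfm.aemeasurable τ
    calc inn f' τ ^ (2:ℝ)
        ≤ ((∫⁻ x in ball τ 1, h x) ^ ((1:ℝ)/2) * V ^ ((1:ℝ)/2)) ^ (2:ℝ) := by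
          gcongr
        _ = (∫⁻ x in ball τ 1, h x) * V := by
          rw [ENNReal.mul_rpow_of_nonneg _ _ (by norm_num), ← ENNReal.rpow_mul,
            ← ENNReal.rpow_mul]
          norm_num
  have hbound : (∫⁻ τ, inn f' τ ^ (2:ℝ) * w τ) ≤ V * (∫⁻ x, h x) * V * C := by
    calc (∫⁻ τ, inn f' τ ^ (2:ℝ) * w τ)
        ≤ ∫⁻ τ, ((∫⁻ x in ball τ 1, h x) * V) * C := lintegral_mono hpt
      _ = (∫⁻ τ, ∫⁻ x in ball τ 1, h x) * V * C := by
          rw [lintegral_mul_const _ ((measurable_ball_lintegral hhm).mul_const _),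
            lintegral_mul_const _ (measurable_ball_lintegral hhm)]
      _ = V * (∫⁻ x, h x) * V * C := by rw [hswap]
  have hfin : (∫⁻ τ, inn f' τ ^ (2:ℝ) * w τ) ≠ ∞ :=
    ne_top_of_le_ne_top (by
      exact ENNReal.mul_ne_top (ENNReal.mul_ne_top (ENNReal.mul_ne_top hVtop h4') hVtop) hC)
      hbound
  unfold NN
  exact (ENNReal.rpow_lt_top_of_nonneg (by norm_num) hfin).ne


lemma lint4_ne_top {G : EuclideanSpace ℝ (Fin d) → ℂ} (hG : MemLp G 4 volume) :
    (∫⁻ x, (ENNReal.ofReal ‖G x‖) ^ (4:ℝ)) ≠ ∞ := by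
  have h := hG.2
  rw [eLpNorm_eq_lintegral_rpow_enorm_toReal (by norm_num) (by norm_num)] at h
  intro htop
  have he : (∫⁻ x, ‖G x‖ₑ ^ ((4:ℝ≥0∞)).toReal) = ∞ := by
    rw [show ((4:ℝ≥0∞)).toReal = (4:ℝ) by simp]
    rw [← htop]
    refine lintegral_congr fun x => ?_
    rw [ofReal_norm_eq_enorm]
  rw [he] at h
  simp [ENNReal.top_rpow_of_pos, ENNReal.toReal_ofNat] at h

lemma conv_eq {s : EuclideanSpace ℝ (Fin d) → ℝ} (hs : AEStronglyMeasurable s volume)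
    {χ : EuclideanSpace ℝ (Fin d) → ℝ} (hχ : Measurable χ) (hχ0 : ∀ τ, 0 ≤ χ τ)
    (hfin : ∀ τ, inn (fun x => ENNReal.ofReal |s x|) τ ≠ ∞) :
    (∫ τ, (∫ x in ball τ 1, s x ^ 2) ^ 2 * χ τ) ^ ((1:ℝ)/4)
      = (NN (fun τ => ENNReal.ofReal (χ τ)) (fun x => ENNReal.ofReal |s x|)).toReal := by
  set f : EuclideanSpace ℝ (Fin d) → ℝ≥0∞ := fun x => ENNReal.ofReal |s x| with hfdef
  have hfae : AEMeasurable f volume :=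
    (continuous_abs.measurable.comp_aemeasurable hs.aemeasurable).ennreal_ofReal
  set f' := hfae.mk f with hf'def
  have hfm : Measurable f' := hfae.measurable_mk
  have hinnf : inn f = inn f' := inn_congr hfae.ae_eq_mk
  have hNN : NN (fun τ => ENNReal.ofReal (χ τ)) f = NN (fun τ => ENNReal.ofReal (χ τ)) f' :=
    NN_congr hfae.ae_eq_mk
  have step1 : ∀ τ, (∫ x in ball τ 1, s x ^ 2) = (inn f τ).toReal := by
    intro τ
    have hsm : AEStronglyMeasurable (fun x => s x ^ 2) (volume.restrict (ball τ 1)) :=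
      ((hs.restrict.mul hs.restrict).congr
        (Filter.Eventually.of_forall fun x => (sq (s x)).symm))
    rw [integral_eq_lintegral_of_nonneg_ae
      (Filter.Eventually.of_forall fun x => sq_nonneg (s x)) hsm]
    congr 1
    refine lintegral_congr fun x => ?_
    rw [← sq_abs, ENNReal.ofReal_pow (abs_nonneg _)]
    rw [hfdef]
    rw [← ENNReal.rpow_natCast]
    norm_num
  simp only [step1]
  have hmeasτ : Measurable (fun τ => (inn f' τ).toReal ^ 2 * χ τ) :=
    (((measurable_inn hfm).ennreal_toReal).pow_const 2).mul hχ
  have hcongτ : (fun τ => (inn f τ).toReal ^ 2 * χ τ)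
      = fun τ => (inn f' τ).toReal ^ 2 * χ τ := by
    funext τ; rw [hinnf]
  rw [integral_eq_lintegral_of_nonneg_ae
    (Filter.Eventually.of_forall fun τ => mul_nonneg (sq_nonneg _) (hχ0 τ))
    (by rw [hcongτ]; exact hmeasτ.aestronglyMeasurable)]
  rw [ENNReal.toReal_rpow]
  congr 1
  unfold NN
  congr 1
  refine lintegral_congr fun τ => ?_
  have hfinτ : inn f τ ≠ ∞ := hfin τ
  rw [ENNReal.ofReal_mul (sq_nonneg _), ENNReal.ofReal_pow ENNReal.toReal_nonneg,
    ENNReal.ofReal_toReal hfinτ, ← ENNReal.rpow_natCast]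
  norm_num



section Main

variable {d : ℕ}

lemma LNorm_nonneg (χ : EuclideanSpace ℝ (Fin d) → ℝ) (hχ0 : ∀ τ, 0 ≤ χ τ)
    (G : EuclideanSpace ℝ (Fin d) → ℂ) : 0 ≤ LNorm χ G :=
  Real.rpow_nonneg (integral_nonneg fun τ => mul_nonneg (sq_nonneg _) (hχ0 τ)) _

lemma LNorm_eq {χ : EuclideanSpace ℝ (Fin d) → ℝ} (hχ : Measurable χ) (hχ0 : ∀ τ, 0 ≤ χ τ)
    {G : EuclideanSpace ℝ (Fin d) → ℂ} (hG : MemLp G 4 volume) :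
    LNorm χ G = (NN (fun τ => ENNReal.ofReal (χ τ)) (fun x => ENNReal.ofReal ‖G x‖)).toReal := by
  have haem : AEMeasurable (fun x => ENNReal.ofReal ‖G x‖) volume :=
    hG.1.norm.aemeasurable.ennreal_ofReal
  have hfin : ∀ τ, inn (fun x => ENNReal.ofReal ‖G x‖) τ ≠ ∞ :=
    inn_ne_top haem (lint4_ne_top hG)
  have h := conv_eq (s := fun x => ‖G x‖) hG.1.norm hχ hχ0
    (by simpa only [abs_norm] using hfin)
  unfold LNorm
  simpa only [abs_norm] using h


lemma key_bound {χ : EuclideanSpace ℝ (Fin d) → ℝ} (hχmeas : Measurable χ)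
    (hχ0 : ∀ τ, 0 ≤ χ τ) {M : ℝ} (hM : ∀ τ, χ τ ≤ M)
    {F H : EuclideanSpace ℝ (Fin d) → ℂ}
    (hF : MemLp F 4 volume) (hH : MemLp H 4 volume)
    (lam : ℂ) (hlam : ‖lam‖ = 1) (c : ℂ) (hcl : ‖c - lam‖ = |‖c‖ - 1|) :
    LNorm χ (fun x => H x - lam * F x) ≤ 2 * LNorm χ (fun x => H x - c * F x)
      + (∫ τ, (∫ x in ball τ 1, (‖H x‖ - ‖F x‖) ^ 2) ^ 2 * χ τ) ^ ((1:ℝ)/4) := by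
  set w : EuclideanSpace ℝ (Fin d) → ℝ≥0∞ := fun τ => ENNReal.ofReal (χ τ) with hw
  have hwm : Measurable w := hχmeas.ennreal_ofReal
  have hwle : ∀ τ, w τ ≤ ENNReal.ofReal M := fun τ => ENNReal.ofReal_le_ofReal (hM τ)
  have hG1 : MemLp (fun x => H x - lam * F x) 4 volume := hH.sub (hF.const_mul lam)
  have hG2 : MemLp (fun x => H x - c * F x) 4 volume := hH.sub (hF.const_mul c)
  have hG6 : MemLp (fun x => H x - F x) 4 volume := hH.sub hF
  set f₁ : EuclideanSpace ℝ (Fin d) → ℝ≥0∞ := fun x => ENNReal.ofReal ‖H x - lam * F x‖ with hf1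
  set f₂ : EuclideanSpace ℝ (Fin d) → ℝ≥0∞ := fun x => ENNReal.ofReal ‖H x - c * F x‖ with hf2
  set f₃ : EuclideanSpace ℝ (Fin d) → ℝ≥0∞ := fun x => ENNReal.ofReal (|‖c‖ - 1| * ‖F x‖) with hf3
  set f₄ : EuclideanSpace ℝ (Fin d) → ℝ≥0∞ := fun x => ENNReal.ofReal |‖c * F x‖ - ‖H x‖| with hf4
  set f₅ : EuclideanSpace ℝ (Fin d) → ℝ≥0∞ := fun x => ENNReal.ofReal |‖H x‖ - ‖F x‖| with hf5
  have ae₂ : AEMeasurable f₂ volume := hG2.1.norm.aemeasurable.ennreal_ofReal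
  have ae₃ : AEMeasurable f₃ volume :=
    (aemeasurable_const.mul hF.1.norm.aemeasurable).ennreal_ofReal
  have ae₄ : AEMeasurable f₄ volume :=
    (continuous_abs.measurable.comp_aemeasurable
      ((hF.const_mul c).1.norm.aemeasurable.sub hH.1.norm.aemeasurable)).ennreal_ofReal
  have ae₅ : AEMeasurable f₅ volume :=
    (continuous_abs.measurable.comp_aemeasurable
      (hH.1.norm.aemeasurable.sub hF.1.norm.aemeasurable)).ennreal_ofReal
  have step1 : NN w f₁ ≤ NN w f₂ + NN w f₃ := by
    refine le_trans (NN_mono fun x => ?_) (NN_add hwm ae₂ ae₃)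
    rw [hf1, ← ENNReal.ofReal_add (norm_nonneg _)
      (mul_nonneg (abs_nonneg _) (norm_nonneg _))]
    apply ENNReal.ofReal_le_ofReal
    have hsplit : H x - lam * F x = (H x - c * F x) + (c - lam) * F x := by ring
    calc ‖H x - lam * F x‖ ≤ ‖H x - c * F x‖ + ‖(c - lam) * F x‖ := by
          rw [hsplit]; exact norm_add_le _ _
      _ = ‖H x - c * F x‖ + |‖c‖ - 1| * ‖F x‖ := by
          rw [norm_mul, hcl]
  have step2 : NN w f₃ ≤ NN w f₄ + NN w f₅ := by
    refine le_trans (NN_mono fun x => ?_) (NN_add hwm ae₄ ae₅)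
    rw [hf3, ← ENNReal.ofReal_add (abs_nonneg _) (abs_nonneg _)]
    apply ENNReal.ofReal_le_ofReal
    have e1 : |‖c‖ - 1| * ‖F x‖ = |‖c * F x‖ - ‖F x‖| := by
      rw [norm_mul, ← abs_of_nonneg (norm_nonneg (F x)), ← abs_mul, sub_mul, one_mul,
        abs_of_nonneg (norm_nonneg (F x))]
    rw [e1]
    exact abs_sub_le _ (‖H x‖) _
  have step3 : NN w f₄ ≤ NN w f₂ := by
    refine NN_mono fun x => ENNReal.ofReal_le_ofReal ?_
    calc |‖c * F x‖ - ‖H x‖| ≤ ‖(c * F x) - H x‖ := abs_norm_sub_norm_le _ _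
      _ = ‖H x - c * F x‖ := norm_sub_rev _ _
  have chain : NN w f₁ ≤ 2 * NN w f₂ + NN w f₅ := by
    calc NN w f₁ ≤ NN w f₂ + (NN w f₄ + NN w f₅) := le_trans step1 (by gcongr)
      _ ≤ NN w f₂ + (NN w f₂ + NN w f₅) := by gcongr
      _ = 2 * NN w f₂ + NN w f₅ := by ring
  have h45 : (∫⁻ x, f₅ x ^ (4:ℝ)) ≠ ∞ := by
    refine ne_top_of_le_ne_top (lint4_ne_top hG6) (lintegral_mono fun x => ?_)
    gcongr
    exact ENNReal.ofReal_le_ofReal (abs_norm_sub_norm_le _ _)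
  have fin₂ : NN w f₂ ≠ ∞ := NN_ne_top hwle ENNReal.ofReal_ne_top ae₂ (lint4_ne_top hG2)
  have fin₅ : NN w f₅ ≠ ∞ := NN_ne_top hwle ENNReal.ofReal_ne_top ae₅ h45
  have hT : (∫ τ, (∫ x in ball τ 1, (‖H x‖ - ‖F x‖) ^ 2) ^ 2 * χ τ) ^ ((1:ℝ)/4)
      = (NN w f₅).toReal := by
    have := conv_eq (s := fun x => ‖H x‖ - ‖F x‖) (hH.1.norm.sub hF.1.norm) hχmeas hχ0
      (inn_ne_top ae₅ h45)
    exact this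
  rw [LNorm_eq hχmeas hχ0 hG1, LNorm_eq hχmeas hχ0 hG2, hT]
  have hRfin : 2 * NN w f₂ + NN w f₅ ≠ ∞ :=
    ENNReal.add_ne_top.mpr ⟨ENNReal.mul_ne_top (by norm_num) fin₂, fin₅⟩
  have h := ENNReal.toReal_mono hRfin chain
  rwa [ENNReal.toReal_add (ENNReal.mul_ne_top (by norm_num) fin₂) fin₅,
    ENNReal.toReal_mul, show ((2:ℝ≥0∞)).toReal = 2 by simp] at h

end Main


/-- For a bounded measurable weight `χ ≥ 0` and `F, H ∈ L⁴(ℝ^d)`: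
`inf_{|λ|=1} ‖H−λF‖_{ℒ(χ)} ≤ 2 inf_{c∈ℂ} ‖H−cF‖_{ℒ(χ)} + ‖|H|−|F|‖_{ℒ(χ)}`. -/
theorem replace_constraint (d : ℕ)
    (χ : EuclideanSpace ℝ (Fin d) → ℝ) (hχmeas : Measurable χ)
    (hχ0 : ∀ τ, 0 ≤ χ τ) (hχbdd : ∃ M : ℝ, ∀ τ, χ τ ≤ M)
    (F H : EuclideanSpace ℝ (Fin d) → ℂ)
    (hF : MemLp F 4 volume) (hH : MemLp H 4 volume) :
    (⨅ lam : {c : ℂ // ‖c‖ = 1}, LNorm χ (fun x => H x - (lam : ℂ) * F x)) ≤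
      2 * (⨅ c : ℂ, LNorm χ (fun x => H x - c * F x)) +
        (∫ τ, (∫ x in Metric.ball τ 1, (‖H x‖ - ‖F x‖) ^ 2) ^ 2 * χ τ) ^ ((1 : ℝ) / 4) := by
  obtain ⟨M, hM⟩ := hχbdd
  have hLnonneg : ∀ G : EuclideanSpace ℝ (Fin d) → ℂ, 0 ≤ LNorm χ G :=
    fun G => LNorm_nonneg χ hχ0 G
  have hbdd : BddBelow (Set.range fun lam : {c : ℂ // ‖c‖ = 1} =>
      LNorm χ (fun x => H x - (lam : ℂ) * F x)) := by
    refine ⟨0, ?_⟩; rintro y ⟨lam, rfl⟩; exact hLnonneg _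
  have key : ∀ c : ℂ,
      (⨅ lam : {c : ℂ // ‖c‖ = 1}, LNorm χ (fun x => H x - (lam : ℂ) * F x)) ≤
      2 * LNorm χ (fun x => H x - c * F x) +
        (∫ τ, (∫ x in Metric.ball τ 1, (‖H x‖ - ‖F x‖) ^ 2) ^ 2 * χ τ) ^ ((1 : ℝ) / 4) := by
    intro c
    by_cases hc : c = 0
    · have hcl : ‖c - (1:ℂ)‖ = |‖c‖ - 1| := by simp [hc]
      exact le_trans (ciInf_le hbdd ⟨1, by simp⟩)
        (key_bound hχmeas hχ0 hM hF hH 1 (by simp) c hcl)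
    · set lam : ℂ := (‖c‖:ℂ)⁻¹ * c with hlamdef
      have hr : (0:ℝ) < ‖c‖ := norm_pos_iff.mpr hc
      have hlam : ‖lam‖ = 1 := by
        rw [hlamdef, norm_mul, norm_inv, Complex.norm_real, Real.norm_eq_abs,
          abs_of_pos hr, inv_mul_cancel₀ hr.ne']
      have hcl : ‖c - lam‖ = |‖c‖ - 1| := by
        have h1 : c - lam = ((1 - (‖c‖)⁻¹ : ℝ) : ℂ) * c := by
          rw [hlamdef]; push_cast; ring
        rw [h1, norm_mul, Complex.norm_real, Real.norm_eq_abs]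
        rw [show |1 - ‖c‖⁻¹| * ‖c‖ = |(1 - ‖c‖⁻¹) * ‖c‖| from by
          rw [abs_mul, abs_of_pos hr]]
        rw [sub_mul, one_mul, inv_mul_cancel₀ hr.ne', abs_sub_comm]
      exact le_trans (ciInf_le hbdd ⟨lam, hlam⟩)
        (key_bound hχmeas hχ0 hM hF hH lam hlam c hcl)
  refine le_of_forall_sub_le fun ε hε => ?_
  have hlt : (⨅ c : ℂ, LNorm χ (fun x => H x - c * F x)) <
      (⨅ c : ℂ, LNorm χ (fun x => H x - c * F x)) + ε / 2 :=
    lt_add_of_pos_right _ (by linarith)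
  obtain ⟨c, hc⟩ := exists_lt_of_ciInf_lt hlt
  have hk := key c
  linarith
end Aux
end

section
/- The function φ₂ : ℝ → ℝ defined by φ₂(0) = 1 and φ₂(ξ) = πξ(1+ξ²)/sinh(πξ) for ξ ≠ 0 is positive and log-concave on ℝ, i.e., log ∘ φ₂ is concave on ℝ. (This function equals ξ ↦ |Γ(2 − iξ)|², where Γ is the complex Gamma function.) -/
open Real Set Filter Topology

/-- The function `φ₂(ξ) = πξ(1+ξ²)/sinh(πξ)` for `ξ ≠ 0`, with `φ₂(0) = 1`
(its limit value); it equals `ξ ↦ |Γ(2 − iξ)|²`. -/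
noncomputable def phiTwo (ξ : ℝ) : ℝ :=
  if ξ = 0 then 1 else Real.pi * ξ * (1 + ξ ^ 2) / Real.sinh (Real.pi * ξ)

section Aux



/-- Helper: a function vanishing at `0` with nonnegative derivative on `[0,∞)`
is nonnegative on `[0,∞)`. -/
lemma nonneg_of_deriv_nonneg_aux {F F' : ℝ → ℝ}
    (hd : ∀ x, HasDerivAt F (F' x) x) (h0 : F 0 = 0)
    (hF' : ∀ x, 0 ≤ x → 0 ≤ F' x) : ∀ u, 0 ≤ u → 0 ≤ F u := by
  intro u hu
  have hmono : MonotoneOn F (Ici (0:ℝ)) := by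
    apply monotoneOn_of_deriv_nonneg (convex_Ici 0)
    · exact fun x _ => (hd x).continuousAt.continuousWithinAt
    · exact fun x _ => (hd x).differentiableAt.differentiableWithinAt
    · intro x hx
      rw [interior_Ici] at hx
      rw [(hd x).deriv]
      exact hF' x hx.le
  have := hmono (self_mem_Ici) (mem_Ici.2 hu) hu
  linarith [this, h0.symm ▸ this]

lemma sinh_ge_cubic (u : ℝ) (hu : 0 ≤ u) : u + u ^ 3 / 6 ≤ Real.sinh u := by
  have h1 : ∀ v, (0:ℝ) ≤ v → 0 ≤ Real.cosh v - 1 - v ^ 2 / 2 := by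
    apply nonneg_of_deriv_nonneg_aux (F' := fun v => Real.sinh v - v)
    · intro x
      have h := ((Real.hasDerivAt_cosh x).sub_const 1).sub
          ((hasDerivAt_pow 2 x).div_const 2)
      refine h.congr_deriv ?_
      push_cast; ring
    · simp
    · intro x hx
      simpa using (Real.self_le_sinh_iff.2 hx)
  have h2 : ∀ v, (0:ℝ) ≤ v → 0 ≤ Real.sinh v - (v + v ^ 3 / 6) := by
    apply nonneg_of_deriv_nonneg_aux (F' := fun v => Real.cosh v - (1 + v ^ 2 / 2))
    · intro x
      have h := (Real.hasDerivAt_sinh x).sub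
          ((hasDerivAt_id' x).add ((hasDerivAt_pow 3 x).div_const 6))
      refine h.congr_deriv ?_
      push_cast; ring
    · simp
    · intro x hx
      have := h1 x hx
      linarith
  linarith [h2 u hu]

/-- `sinh u ≤ u * cosh u` for `u ≥ 0`. -/
lemma sinh_le_mul_cosh (u : ℝ) (hu : 0 ≤ u) : Real.sinh u ≤ u * Real.cosh u := by
  have h : ∀ v, (0:ℝ) ≤ v → 0 ≤ v * Real.cosh v - Real.sinh v := by
    apply nonneg_of_deriv_nonneg_aux (F' := fun v => v * Real.sinh v)
    · intro x
      have h := ((hasDerivAt_id' x).mul (Real.hasDerivAt_cosh x)).sub (Real.hasDerivAt_sinh x)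
      refine h.congr_deriv ?_
      push_cast; ring
    · simp
    · intro x hx
      exact mul_nonneg hx (by positivity)
  linarith [h u hu]

/-- Key bound: `(15 + 6u²)·sinh u ≤ (15u + u³)·cosh u` for `u ≥ 0`
(equivalently `tanh u ≤ u(15+u²)/(15+6u²)`). -/
lemma tanh_upper (u : ℝ) (hu : 0 ≤ u) :
    (15 + 6 * u ^ 2) * Real.sinh u ≤ (15 * u + u ^ 3) * Real.cosh u := by
  have hG : ∀ v, (0:ℝ) ≤ v → 0 ≤ (v ^ 2 + 3) * Real.sinh v - 3 * v * Real.cosh v := by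
    apply nonneg_of_deriv_nonneg_aux
      (F' := fun v => v * (v * Real.cosh v - Real.sinh v))
    · intro x
      have h := (((hasDerivAt_pow 2 x).add_const 3).mul (Real.hasDerivAt_sinh x)).sub
          (((hasDerivAt_id' x).const_mul 3).mul (Real.hasDerivAt_cosh x))
      refine h.congr_deriv ?_
      push_cast; ring
    · simp
    · intro x hx
      exact mul_nonneg hx (by linarith [sinh_le_mul_cosh x hx])
  have hF : ∀ v, (0:ℝ) ≤ v →
      0 ≤ (15 * v + v ^ 3) * Real.cosh v - (15 + 6 * v ^ 2) * Real.sinh v := by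
    apply nonneg_of_deriv_nonneg_aux
      (F' := fun v => v * ((v ^ 2 + 3) * Real.sinh v - 3 * v * Real.cosh v))
    · intro x
      have h := ((((hasDerivAt_id' x).const_mul 15).add (hasDerivAt_pow 3 x)).mul
            (Real.hasDerivAt_cosh x)).sub
          ((((hasDerivAt_pow 2 x).const_mul 6).const_add 15).mul (Real.hasDerivAt_sinh x))
      refine h.congr_deriv ?_
      push_cast [Pi.add_apply]; ring
    · simp
    · intro x hx
      exact mul_nonneg hx (hG x hx)
  linarith [hF u hu]



lemma phiTwo_pos (ξ : ℝ) : 0 < phiTwo ξ := by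
  unfold phiTwo
  rcases eq_or_ne ξ 0 with h | h
  · simp [h]
  rw [if_neg h]
  rcases lt_or_gt_of_ne h with hneg | hpos
  · apply div_pos_of_neg_of_neg
    · have : Real.pi * ξ < 0 := mul_neg_of_pos_of_neg Real.pi_pos hneg
      nlinarith [sq_nonneg ξ]
    · exact Real.sinh_neg_iff.2 (mul_neg_of_pos_of_neg Real.pi_pos hneg)
  · apply div_pos
    · have : 0 < Real.pi * ξ := mul_pos Real.pi_pos hpos
      nlinarith [sq_nonneg ξ]
    · exact Real.sinh_pos_iff.2 (mul_pos Real.pi_pos hpos)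

lemma phiTwo_even (ξ : ℝ) : phiTwo (-ξ) = phiTwo ξ := by
  unfold phiTwo
  rcases eq_or_ne ξ 0 with h | h
  · simp [h]
  rw [if_neg (neg_ne_zero.2 h), if_neg h]
  rw [mul_neg, Real.sinh_neg, neg_sq, neg_mul, neg_div_neg_eq]

lemma continuous_phiTwo : Continuous phiTwo := by
  rw [continuous_iff_continuousAt]
  intro x
  rcases eq_or_ne x 0 with rfl | hx
  · -- continuity at 0
    have hslope : Tendsto (fun y : ℝ => Real.sinh y / y) (𝓝[≠] (0:ℝ)) (𝓝 1) := by
      have h := Real.hasDerivAt_sinh 0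
      rw [hasDerivAt_iff_tendsto_slope] at h
      have hfe : (fun y : ℝ => Real.sinh y / y) = fun b : ℝ => b⁻¹ * Real.sinh b := by
        funext y; rw [div_eq_inv_mul]
      rw [hfe]
      simpa [slope_fun_def, Real.sinh_zero, Real.cosh_zero] using h
    have hmul : Tendsto (fun ξ : ℝ => Real.pi * ξ) (𝓝[≠] (0:ℝ)) (𝓝[≠] (0:ℝ)) := by
      rw [tendsto_nhdsWithin_iff]
      constructor
      · have : Tendsto (fun ξ : ℝ => Real.pi * ξ) (𝓝 0) (𝓝 (Real.pi * 0)) :=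
          (continuous_const.mul continuous_id).tendsto 0
        simpa using this.mono_left nhdsWithin_le_nhds
      · filter_upwards [self_mem_nhdsWithin] with y hy
        exact mul_ne_zero Real.pi_ne_zero hy
    have h1 : Tendsto (fun ξ : ℝ => Real.sinh (Real.pi * ξ) / (Real.pi * ξ))
        (𝓝[≠] (0:ℝ)) (𝓝 1) := hslope.comp hmul
    have h2 : Tendsto (fun ξ : ℝ => (1 + ξ ^ 2) / (Real.sinh (Real.pi * ξ) / (Real.pi * ξ)))
        (𝓝[≠] (0:ℝ)) (𝓝 1) := by
      have hnum : Tendsto (fun ξ : ℝ => 1 + ξ ^ 2) (𝓝[≠] (0:ℝ)) (𝓝 1) := by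
        have : Tendsto (fun ξ : ℝ => 1 + ξ ^ 2) (𝓝 0) (𝓝 (1 + 0 ^ 2)) :=
          (continuous_const.add (continuous_pow 2)).tendsto 0
        simpa using this.mono_left nhdsWithin_le_nhds
      simpa [Pi.div_def] using hnum.div h1 one_ne_zero
    have heq : (fun ξ : ℝ => (1 + ξ ^ 2) / (Real.sinh (Real.pi * ξ) / (Real.pi * ξ)))
        =ᶠ[𝓝[≠] (0:ℝ)] phiTwo := by
      filter_upwards [self_mem_nhdsWithin] with y hy
      have hy' : y ≠ 0 := hy
      have hπy : Real.pi * y ≠ 0 := mul_ne_zero Real.pi_ne_zero hy'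
      have hs : Real.sinh (Real.pi * y) ≠ 0 := Real.sinh_ne_zero.2 hπy
      unfold phiTwo
      rw [if_neg hy']
      field_simp
    have h3 : Tendsto phiTwo (𝓝[≠] (0:ℝ)) (𝓝 1) := h2.congr' heq
    have : Tendsto phiTwo (𝓝 (0:ℝ)) (𝓝 1) := by
      rw [← nhdsNE_sup_pure 0, tendsto_sup]
      refine ⟨h3, ?_⟩
      have h0 : phiTwo 0 = 1 := by unfold phiTwo; simp
      have := tendsto_pure_nhds phiTwo 0
      rwa [h0] at this
    have h0 : phiTwo 0 = 1 := by unfold phiTwo; simp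
    rw [ContinuousAt, h0]
    exact this
  · -- continuity away from 0
    have heq : (fun ξ : ℝ => Real.pi * ξ * (1 + ξ ^ 2) / Real.sinh (Real.pi * ξ))
        =ᶠ[𝓝 x] phiTwo := by
      filter_upwards [isOpen_ne.mem_nhds hx] with y hy
      unfold phiTwo; rw [if_neg hy]
    refine ContinuousAt.congr ?_ heq
    apply ContinuousAt.div
    · fun_prop
    · fun_prop
    · exact Real.sinh_ne_zero.2 (mul_ne_zero Real.pi_ne_zero hx)
end Aux

section C
open Real

noncomputable def phiD1 (x : ℝ) : ℝ :=
  1 / x + 2 * x / (1 + x ^ 2) - Real.pi * Real.cosh (Real.pi * x) / Real.sinh (Real.pi * x)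

noncomputable def phiD2 (x : ℝ) : ℝ :=
  -(1 / x ^ 2) + 2 * (1 - x ^ 2) / (1 + x ^ 2) ^ 2 + Real.pi ^ 2 / Real.sinh (Real.pi * x) ^ 2

lemma hasDerivAt_logPhi {x : ℝ} (hx : 0 < x) :
    HasDerivAt (fun ξ => Real.log (phiTwo ξ)) (phiD1 x) x := by
  have hπx : 0 < Real.pi * x := mul_pos Real.pi_pos hx
  have hs : 0 < Real.sinh (Real.pi * x) := Real.sinh_pos_iff.2 hπx
  have h1y2 : HasDerivAt (fun y : ℝ => 1 + y ^ 2) (2 * x) x := by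
    have h := (hasDerivAt_pow 2 x).const_add 1
    refine h.congr_deriv ?_
    push_cast; ring
  have hsin : HasDerivAt (fun y : ℝ => Real.sinh (Real.pi * y))
      (Real.cosh (Real.pi * x) * (Real.pi * 1)) x := ((hasDerivAt_id' x).const_mul Real.pi).sinh
  have total : HasDerivAt
      (fun y : ℝ => Real.log Real.pi + Real.log y + Real.log (1 + y ^ 2)
        - Real.log (Real.sinh (Real.pi * y)))
      (0 + x⁻¹ + 2 * x / (1 + x ^ 2)
        - Real.cosh (Real.pi * x) * (Real.pi * 1) / Real.sinh (Real.pi * x)) x := by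
    exact (((hasDerivAt_const x (Real.log Real.pi)).add (Real.hasDerivAt_log hx.ne')).add
      (h1y2.log (by positivity))).sub (hsin.log hs.ne')
  have hval : (0 + x⁻¹ + 2 * x / (1 + x ^ 2)
      - Real.cosh (Real.pi * x) * (Real.pi * 1) / Real.sinh (Real.pi * x)) = phiD1 x := by
    unfold phiD1
    rw [one_div]
    ring
  rw [hval] at total
  refine total.congr_of_eventuallyEq ?_
  filter_upwards [Ioi_mem_nhds hx] with y hy
  have hy : (0:ℝ) < y := hy
  have hπy : 0 < Real.pi * y := mul_pos Real.pi_pos hy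
  have hsy : 0 < Real.sinh (Real.pi * y) := Real.sinh_pos_iff.2 hπy
  unfold phiTwo
  rw [if_neg hy.ne']
  rw [Real.log_div (by positivity) hsy.ne', Real.log_mul (by positivity) (by positivity),
    Real.log_mul Real.pi_ne_zero hy.ne']

lemma hasDerivAt_phiD1 {x : ℝ} (hx : 0 < x) : HasDerivAt phiD1 (phiD2 x) x := by
  have hπx : 0 < Real.pi * x := mul_pos Real.pi_pos hx
  have hs : 0 < Real.sinh (Real.pi * x) := Real.sinh_pos_iff.2 hπx
  have h1y2 : HasDerivAt (fun y : ℝ => 1 + y ^ 2) (2 * x) x := by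
    have h := (hasDerivAt_pow 2 x).const_add 1
    refine h.congr_deriv ?_
    push_cast; ring
  have hA : HasDerivAt (fun y : ℝ => 1 / y) (-(1 / x ^ 2)) x := by
    have h := hasDerivAt_inv hx.ne'
    simp only [one_div]
    convert h using 1
  have hB : HasDerivAt (fun y : ℝ => 2 * y / (1 + y ^ 2))
      (2 * (1 - x ^ 2) / (1 + x ^ 2) ^ 2) x := by
    have h := (((hasDerivAt_id' x).const_mul 2).div h1y2 (by positivity))
    refine h.congr_deriv ?_
    field_simp
    ring
  have hsin : HasDerivAt (fun y : ℝ => Real.sinh (Real.pi * y))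
      (Real.cosh (Real.pi * x) * (Real.pi * 1)) x := ((hasDerivAt_id' x).const_mul Real.pi).sinh
  have hcosh : HasDerivAt (fun y : ℝ => Real.pi * Real.cosh (Real.pi * y))
      (Real.pi * (Real.sinh (Real.pi * x) * (Real.pi * 1))) x :=
    (((hasDerivAt_id' x).const_mul Real.pi).cosh).const_mul Real.pi
  have hC : HasDerivAt (fun y : ℝ => Real.pi * Real.cosh (Real.pi * y) / Real.sinh (Real.pi * y))
      (-(Real.pi ^ 2 / Real.sinh (Real.pi * x) ^ 2)) x := by
    have h := hcosh.div hsin hs.ne'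
    refine h.congr_deriv ?_
    have hcs := Real.cosh_sq (Real.pi * x)
    field_simp
    linear_combination (-1) * hcs
  have total := (hA.add hB).sub hC
  have hval : (-(1 / x ^ 2) + 2 * (1 - x ^ 2) / (1 + x ^ 2) ^ 2
      - -(Real.pi ^ 2 / Real.sinh (Real.pi * x) ^ 2)) = phiD2 x := by
    unfold phiD2; ring
  rw [hval] at total
  exact total.congr_of_eventuallyEq (by
    filter_upwards with y
    unfold phiD1
    simp only [Pi.add_apply, Pi.sub_apply])

lemma phiD1_nonpos {x : ℝ} (hx : 0 < x) : phiD1 x ≤ 0 := by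
  have hπx : 0 < Real.pi * x := mul_pos Real.pi_pos hx
  have hs : 0 < Real.sinh (Real.pi * x) := Real.sinh_pos_iff.2 hπx
  have hc : 0 < Real.cosh (Real.pi * x) := Real.cosh_pos _
  have hF := tanh_upper (Real.pi * x) hπx.le
  have hπ3 := Real.pi_gt_three
  have hpoly : (1 + 3 * x ^ 2) * (15 + (Real.pi * x) ^ 2)
      ≤ (1 + x ^ 2) * (15 + 6 * (Real.pi * x) ^ 2) := by
    have hπ2 : 9 < Real.pi ^ 2 := by nlinarith
    nlinarith [hπ2, sq_nonneg x, sq_nonneg (x ^ 2), sq_nonneg (Real.pi * x)]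
  have key : (1 + 3 * x ^ 2) * Real.sinh (Real.pi * x)
      ≤ Real.pi * x * (1 + x ^ 2) * Real.cosh (Real.pi * x) := by
    have h1 : (1 + 3 * x ^ 2) * ((15 + 6 * (Real.pi * x) ^ 2) * Real.sinh (Real.pi * x))
        ≤ (1 + 3 * x ^ 2) * ((15 * (Real.pi * x) + (Real.pi * x) ^ 3) * Real.cosh (Real.pi * x)) :=
      mul_le_mul_of_nonneg_left hF (by positivity)
    have h2 : ((1 + 3 * x ^ 2) * (15 + (Real.pi * x) ^ 2)) * (Real.pi * x * Real.cosh (Real.pi * x))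
        ≤ ((1 + x ^ 2) * (15 + 6 * (Real.pi * x) ^ 2)) * (Real.pi * x * Real.cosh (Real.pi * x)) :=
      mul_le_mul_of_nonneg_right hpoly (by positivity)
    have h3 : (15 + 6 * (Real.pi * x) ^ 2) * ((1 + 3 * x ^ 2) * Real.sinh (Real.pi * x))
        ≤ (15 + 6 * (Real.pi * x) ^ 2) * (Real.pi * x * (1 + x ^ 2) * Real.cosh (Real.pi * x)) := by
      nlinarith [h1, h2]
    exact le_of_mul_le_mul_left h3 (by positivity)
  have e : phiD1 x = ((1 + 3 * x ^ 2) * Real.sinh (Real.pi * x)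
      - Real.pi * x * (1 + x ^ 2) * Real.cosh (Real.pi * x))
      / (x * (1 + x ^ 2) * Real.sinh (Real.pi * x)) := by
    unfold phiD1
    field_simp
    ring
  rw [e]
  apply div_nonpos_of_nonpos_of_nonneg
  · linarith
  · positivity

lemma phiD2_nonpos {x : ℝ} (hx : 0 < x) : phiD2 x ≤ 0 := by
  have hπx : 0 < Real.pi * x := mul_pos Real.pi_pos hx
  have hs : 0 < Real.sinh (Real.pi * x) := Real.sinh_pos_iff.2 hπx
  have hπ3 := Real.pi_gt_three
  have hs3 := sinh_ge_cubic (Real.pi * x) hπx.le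
  have key : (Real.pi * x) ^ 2 * (1 + x ^ 2) ^ 2 ≤ (1 + 3 * x ^ 4) * Real.sinh (Real.pi * x) ^ 2 := by
    have hπ2 : 9 < Real.pi ^ 2 := by nlinarith
    have h1 : (Real.pi * x + (Real.pi * x) ^ 3 / 6) ^ 2 ≤ Real.sinh (Real.pi * x) ^ 2 :=
      pow_le_pow_left₀ (by positivity) hs3 2
    have h2 : (1 + 3 * x ^ 4) * (Real.pi * x + (Real.pi * x) ^ 3 / 6) ^ 2
        ≤ (1 + 3 * x ^ 4) * Real.sinh (Real.pi * x) ^ 2 :=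
      mul_le_mul_of_nonneg_left h1 (by positivity)
    have h3 : (1 + x ^ 2) ^ 2 ≤ (1 + 3 * x ^ 4) * (1 + Real.pi ^ 2 * x ^ 2 / 6) ^ 2 := by
      nlinarith [hπ2, sq_nonneg x, sq_nonneg (x ^ 2), sq_nonneg (x ^ 3),
        sq_nonneg (Real.pi * x), sq_nonneg (Real.pi ^ 2 * x ^ 2), sq_nonneg (Real.pi * x ^ 2),
        sq_nonneg (Real.pi ^ 2 * x ^ 3), sq_nonneg (Real.pi ^ 2 * x ^ 4)]
    have h4 := mul_le_mul_of_nonneg_left h3 (show (0:ℝ) ≤ Real.pi ^ 2 * x ^ 2 by positivity)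
    nlinarith [h2, h4]
  have e : phiD2 x = ((Real.pi * x) ^ 2 * (1 + x ^ 2) ^ 2
      - (1 + 3 * x ^ 4) * Real.sinh (Real.pi * x) ^ 2)
      / (x ^ 2 * (1 + x ^ 2) ^ 2 * Real.sinh (Real.pi * x) ^ 2) := by
    unfold phiD2
    field_simp
    ring
  rw [e]
  apply div_nonpos_of_nonpos_of_nonneg
  · linarith
  · positivity

lemma continuous_logPhi : Continuous fun ξ : ℝ => Real.log (phiTwo ξ) := by
  rw [continuous_iff_continuousAt]
  intro x
  exact (continuous_phiTwo.continuousAt).log (phiTwo_pos x).ne'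

lemma logPhi_concaveOn_Ici :
    ConcaveOn ℝ (Ici (0:ℝ)) (fun ξ : ℝ => Real.log (phiTwo ξ)) := by
  apply concaveOn_of_hasDerivWithinAt2_nonpos (convex_Ici 0)
    (f' := phiD1) (f'' := phiD2) continuous_logPhi.continuousOn
  · intro x hx
    rw [interior_Ici] at hx
    exact (hasDerivAt_logPhi hx).hasDerivWithinAt
  · intro x hx
    rw [interior_Ici] at hx
    exact (hasDerivAt_phiD1 hx).hasDerivWithinAt
  · intro x hx
    rw [interior_Ici] at hx
    exact phiD2_nonpos hx

lemma logPhi_antitoneOn_Ici :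
    AntitoneOn (fun ξ : ℝ => Real.log (phiTwo ξ)) (Ici (0:ℝ)) := by
  apply antitoneOn_of_hasDerivWithinAt_nonpos (convex_Ici 0)
    (f' := phiD1) continuous_logPhi.continuousOn
  · intro x hx
    rw [interior_Ici] at hx
    exact (hasDerivAt_logPhi hx).hasDerivWithinAt
  · intro x hx
    rw [interior_Ici] at hx
    exact phiD1_nonpos hx

/-- `φ₂` is positive and log-concave on `ℝ`. -/
theorem phiTwo_pos_logConcave :
    (∀ ξ : ℝ, 0 < phiTwo ξ) ∧
      ConcaveOn ℝ Set.univ (fun ξ : ℝ => Real.log (phiTwo ξ)) := by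
  refine ⟨phiTwo_pos, convex_univ, ?_⟩
  intro x _ y _ a b ha hb hab
  set f : ℝ → ℝ := fun ξ => Real.log (phiTwo ξ) with hf
  have habs : ∀ z : ℝ, f z = f |z| := by
    intro z
    rcases abs_choice z with h | h
    · rw [h]
    · rw [h, hf]; simp only [phiTwo_even]
  have key1 : |a * x + b * y| ≤ a * |x| + b * |y| := by
    calc |a * x + b * y| ≤ |a * x| + |b * y| := abs_add_le _ _
    _ = a * |x| + b * |y| := by rw [abs_mul, abs_mul, abs_of_nonneg ha, abs_of_nonneg hb]
  have hcc := logPhi_concaveOn_Ici.2 (mem_Ici.2 (abs_nonneg x)) (mem_Ici.2 (abs_nonneg y)) ha hb hab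
  have hmono := logPhi_antitoneOn_Ici (mem_Ici.2 (abs_nonneg (a * x + b * y)))
    (mem_Ici.2 (by positivity : (0:ℝ) ≤ a * |x| + b * |y|)) key1
  have : a • f x + b • f y ≤ f (a • x + b • y) := by
    calc a • f x + b • f y = a • f |x| + b • f |y| := by rw [habs x, habs y]
    _ ≤ f (a • |x| + b • |y|) := hcc
    _ ≤ f |a * x + b * y| := by
        simpa [smul_eq_mul] using hmono
    _ = f (a • x + b • y) := by rw [← habs]; simp [smul_eq_mul]
  exact this
end C
end

section
/- For every b > 0 there exist constants c₁, c₂ > 0 such that for all ξ ∈ ℝ: c₁/(1+ξ²) ≤ ∫_ℝ e^{−b|ξ−t|} / (1 + π²t²) dt ≤ c₂/(1+ξ²). -/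
open MeasureTheory

open Real Set Filter in
lemma g_int {b : ℝ} (hb : 0 < b) :
    Integrable (fun u : ℝ => (1 + u ^ 2) * Real.exp (-b * |u|)) := by
  have hIoi : IntegrableOn (fun u : ℝ => (1 + u ^ 2) * Real.exp (-b * |u|)) (Ioi 0) := by
    apply integrable_of_isBigO_exp_neg (half_pos hb)
    · exact ((continuous_const.add (continuous_pow 2)).mul
        ((continuous_const.mul continuous_abs).rexp)).continuousOn
    · rw [Asymptotics.isBigO_iff]
      refine ⟨1, ?_⟩
      have h0 : Tendsto (fun x : ℝ => (1 + x ^ 2) * Real.exp (-(b/2) * x)) atTop (nhds 0) := by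
        have h1 : Tendsto (fun x : ℝ => Real.exp (-(b/2) * x)) atTop (nhds 0) := by
          apply Real.tendsto_exp_atBot.comp
          exact Tendsto.const_mul_atTop_of_neg (by linarith) tendsto_id
        have h2 : Tendsto (fun x : ℝ => x ^ 2 * Real.exp (-(b/2) * x)) atTop (nhds 0) := by
          have := tendsto_rpow_mul_exp_neg_mul_atTop_nhds_zero 2 (b/2) (half_pos hb)
          apply this.congr'
          filter_upwards [eventually_gt_atTop 0] with x hx
          rw [Real.rpow_two]
        have := h1.add h2
        simp only [add_zero] at this
        apply this.congr
        intro x; ring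
      have hb1 : ∀ᶠ x : ℝ in atTop, (1 + x ^ 2) * Real.exp (-(b/2) * x) ≤ 1 :=
        Tendsto.eventually_le_const (by norm_num) h0
      filter_upwards [hb1, eventually_ge_atTop 0] with x hx hx0
      have h1x : (0:ℝ) < 1 + x ^ 2 := by positivity
      rw [abs_of_nonneg hx0, Real.norm_eq_abs, Real.norm_eq_abs,
        abs_of_nonneg (by positivity), abs_of_nonneg (Real.exp_pos _).le, one_mul]
      have : Real.exp (-b * x) = Real.exp (-(b/2) * x) * Real.exp (-(b/2) * x) := by
        rw [← Real.exp_add]; ring_nf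
      rw [this]
      calc (1 + x ^ 2) * (Real.exp (-(b/2) * x) * Real.exp (-(b/2) * x))
          = ((1 + x ^ 2) * Real.exp (-(b/2) * x)) * Real.exp (-(b/2) * x) := by ring
        _ ≤ 1 * Real.exp (-(b/2) * x) := by
            apply mul_le_mul_of_nonneg_right hx (Real.exp_pos _).le
        _ = Real.exp (-(b/2) * x) := one_mul _
  have hIic : IntegrableOn (fun u : ℝ => (1 + u ^ 2) * Real.exp (-b * |u|)) (Iic 0) := by
    rw [← Measure.map_neg_eq_self (volume : Measure ℝ)]
    have m : MeasurableEmbedding fun x : ℝ => -x := (Homeomorph.neg ℝ).measurableEmbedding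
    rw [m.integrableOn_map_iff]
    simp_rw [Function.comp_def, abs_neg, neg_preimage, neg_Iic, neg_zero]
    simp only [neg_sq]
    simpa using Iff.mpr integrableOn_Ici_iff_integrableOn_Ioi hIoi
  have := hIic.union hIoi
  rw [Iic_union_Ioi] at this
  exact integrableOn_univ.mp this

open Real Set Filter in
lemma K_int (hb : 0 < b) (ξ : ℝ) :
    Integrable (fun t : ℝ => Real.exp (-b * |ξ - t|) / (1 + Real.pi ^ 2 * t ^ 2)) := by
  have hπ : (1:ℝ) ≤ Real.pi ^ 2 := by nlinarith [Real.pi_gt_three]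
  apply Integrable.mono (integrable_inv_one_add_sq)
  · apply Continuous.aestronglyMeasurable
    apply Continuous.div
    · exact ((continuous_const.mul ((continuous_const.sub continuous_id).abs)).rexp)
    · continuity
    · intro t; positivity
  · filter_upwards with t
    have h1 : (0:ℝ) < 1 + t ^ 2 := by positivity
    have h2 : (0:ℝ) < 1 + Real.pi ^ 2 * t ^ 2 := by positivity
    rw [Real.norm_eq_abs, Real.norm_eq_abs, abs_of_nonneg (by positivity),
      abs_of_nonneg (by positivity : (0:ℝ) ≤ (1 + t^2)⁻¹)]
    rw [div_le_iff₀ h2]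
    have he : Real.exp (-b * |ξ - t|) ≤ 1 := by
      rw [Real.exp_le_one_iff]
      have : (0:ℝ) ≤ b * |ξ - t| := by positivity
      linarith
    calc Real.exp (-b * |ξ - t|) ≤ 1 := he
      _ ≤ (1 + t ^ 2)⁻¹ * (1 + Real.pi ^ 2 * t ^ 2) := by
          rw [inv_mul_eq_div, le_div_iff₀ h1, one_mul]
          nlinarith [sq_nonneg t]

open Real Set Filter in
/-- For every `b > 0` there are `c₁, c₂ > 0` such that for all `ξ ∈ ℝ`,
`c₁/(1+ξ²) ≤ ∫ e^{−b|ξ−t|}/(1+π²t²) dt ≤ c₂/(1+ξ²)`. -/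
theorem cauchy_exp_convolution_equiv (b : ℝ) (hb : 0 < b) :
    ∃ c₁ : ℝ, 0 < c₁ ∧ ∃ c₂ : ℝ, 0 < c₂ ∧ ∀ ξ : ℝ,
      c₁ / (1 + ξ ^ 2) ≤ (∫ t : ℝ, Real.exp (-b * |ξ - t|) / (1 + Real.pi ^ 2 * t ^ 2)) ∧
      (∫ t : ℝ, Real.exp (-b * |ξ - t|) / (1 + Real.pi ^ 2 * t ^ 2)) ≤ c₂ / (1 + ξ ^ 2) := by
  have hπ : (1:ℝ) ≤ Real.pi ^ 2 := by nlinarith [Real.pi_gt_three]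
  set I : ℝ := ∫ u : ℝ, (1 + u ^ 2) * Real.exp (-b * |u|) with hI
  have hIpos : 0 < I := by
    rw [hI, integral_pos_iff_support_of_nonneg]
    · have : Function.support (fun u : ℝ => (1 + u ^ 2) * Real.exp (-b * |u|)) = univ := by
        ext u; simp only [Function.mem_support, mem_univ, iff_true]
        positivity
      rw [this]
      simp [Real.volume_univ]
    · intro u; positivity
    · exact g_int hb
  refine ⟨2 * Real.exp (-b) / (1 + 2 * Real.pi ^ 2), by positivity, 2 * I, by positivity, ?_⟩
  intro ξ
  have hx : (0:ℝ) < 1 + ξ ^ 2 := by positivity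
  constructor
  · -- lower bound
    have hset : ∫ t in Ioo (ξ - 1) (ξ + 1), Real.exp (-b) / ((1 + 2 * Real.pi ^ 2) * (1 + ξ ^ 2))
        ≤ ∫ t in Ioo (ξ - 1) (ξ + 1),
            Real.exp (-b * |ξ - t|) / (1 + Real.pi ^ 2 * t ^ 2) := by
      apply setIntegral_mono_on (integrableOn_const measure_Ioo_lt_top.ne)
        ((K_int hb ξ).integrableOn) measurableSet_Ioo
      intro t ht
      obtain ⟨ht1, ht2⟩ := ht
      have habs : |ξ - t| ≤ 1 := by rw [abs_le]; constructor <;> linarith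
      have hnum : Real.exp (-b) ≤ Real.exp (-b * |ξ - t|) := by
        apply Real.exp_le_exp.mpr
        nlinarith [abs_nonneg (ξ - t)]
      have hden : 1 + Real.pi ^ 2 * t ^ 2 ≤ (1 + 2 * Real.pi ^ 2) * (1 + ξ ^ 2) := by
        have htsq : (t - ξ) ^ 2 ≤ 1 := by nlinarith
        have ht2' : t ^ 2 ≤ 2 + 2 * ξ ^ 2 := by nlinarith [sq_nonneg (2 * ξ - t)]
        have hmul : Real.pi ^ 2 * t ^ 2 ≤ Real.pi ^ 2 * (2 + 2 * ξ ^ 2) :=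
          mul_le_mul_of_nonneg_left ht2' (sq_nonneg Real.pi)
        nlinarith [hmul, sq_nonneg ξ]
      apply div_le_div₀ (Real.exp_pos _).le hnum (by positivity) hden
    have hconst : ∫ t in Ioo (ξ - 1) (ξ + 1),
        Real.exp (-b) / ((1 + 2 * Real.pi ^ 2) * (1 + ξ ^ 2))
        = 2 * (Real.exp (-b) / ((1 + 2 * Real.pi ^ 2) * (1 + ξ ^ 2))) := by
      have h2' : ξ + 1 - (ξ - 1) = (2:ℝ) := by ring
      rw [setIntegral_const, measureReal_def, Real.volume_Ioo, h2',
        ENNReal.toReal_ofReal (by norm_num : (0:ℝ) ≤ 2), smul_eq_mul]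
    have hfull : ∫ t in Ioo (ξ - 1) (ξ + 1),
          Real.exp (-b * |ξ - t|) / (1 + Real.pi ^ 2 * t ^ 2)
        ≤ ∫ t : ℝ, Real.exp (-b * |ξ - t|) / (1 + Real.pi ^ 2 * t ^ 2) := by
      apply setIntegral_le_integral (K_int hb ξ)
      filter_upwards with t
      positivity
    have : 2 * Real.exp (-b) / (1 + 2 * Real.pi ^ 2) / (1 + ξ ^ 2)
        = 2 * (Real.exp (-b) / ((1 + 2 * Real.pi ^ 2) * (1 + ξ ^ 2))) := by
      field_simp
    rw [this]
    calc _ = ∫ t in Ioo (ξ - 1) (ξ + 1),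
            Real.exp (-b) / ((1 + 2 * Real.pi ^ 2) * (1 + ξ ^ 2)) := hconst.symm
      _ ≤ _ := hset
      _ ≤ _ := hfull
  · -- upper bound
    have hInt2 : Integrable (fun t : ℝ =>
        2 * ((1 + (ξ - t) ^ 2) * Real.exp (-b * |ξ - t|)) / (1 + ξ ^ 2)) :=
      (((g_int hb).comp_sub_left ξ).const_mul 2).div_const _
    have key : ∀ t : ℝ, Real.exp (-b * |ξ - t|) / (1 + Real.pi ^ 2 * t ^ 2)
        ≤ 2 * ((1 + (ξ - t) ^ 2) * Real.exp (-b * |ξ - t|)) / (1 + ξ ^ 2) := by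
      intro t
      have h2 : (0:ℝ) < 1 + Real.pi ^ 2 * t ^ 2 := by positivity
      rw [div_le_div_iff₀ h2 hx]
      have hq : 1 + ξ ^ 2 ≤ 2 * ((1 + (ξ - t) ^ 2) * (1 + Real.pi ^ 2 * t ^ 2)) := by
        nlinarith [sq_nonneg (ξ - 2 * t), sq_nonneg (ξ - t), sq_nonneg t,
          sq_nonneg ((ξ - t) * t), Real.pi_gt_three]
      calc Real.exp (-b * |ξ - t|) * (1 + ξ ^ 2)
          ≤ Real.exp (-b * |ξ - t|) * (2 * ((1 + (ξ - t) ^ 2) * (1 + Real.pi ^ 2 * t ^ 2))) := by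
            apply mul_le_mul_of_nonneg_left hq (Real.exp_pos _).le
        _ = 2 * ((1 + (ξ - t) ^ 2) * Real.exp (-b * |ξ - t|)) * (1 + Real.pi ^ 2 * t ^ 2) := by
            ring
    have hmono := integral_mono (K_int hb ξ) hInt2 key
    have heq : ∫ t : ℝ, 2 * ((1 + (ξ - t) ^ 2) * Real.exp (-b * |ξ - t|)) / (1 + ξ ^ 2)
        = 2 * I / (1 + ξ ^ 2) := by
      rw [integral_div, integral_const_mul 2, integral_sub_left_eq_self
        (fun u : ℝ => (1 + u ^ 2) * Real.exp (-b * |u|)) volume ξ]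
    rw [heq] at hmono
    exact hmono
end
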